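/- For all C ≥ 1 and L ≥ 1 there exists L' ≥ 1 (depending only on C and L) such that the following holds. Let (X, μ) be a C-coarse median space, where X is a geodesic metric space. Let x, y ∈ X and p ∈ [x,y]_μ. Let α : [0, s] → X be an (L, L)-quasigeodesic from x to p with image contained in [x,p]_μ, and let β : [0, t] → X be an (L, L)-quasigeodesic from p to y with image contained in [p,y]_μ. Then the concatenation η : [0, s + t] → X, defined by η(r) = α(r) for r ∈ [0, s] and η(r) = β(r − s) for r ∈ [s, s + t], is an (L', L')-quasigeodesic from x to y. -/

import Mathlib

open Metric Set

universe u

/-- A `C`-coarse median on a metric space `X`. -/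
def IsCoarseMedian {X : Type*} [MetricSpace X] (C : ℝ) (μ : X → X → X → X) : Prop :=
  (∀ x y z : X, μ x y z = μ y x z) ∧
  (∀ x y z : X, μ x y z = μ x z y) ∧
  (∀ x y : X, μ x x y = x) ∧
  (∀ x y z w : X, dist (μ (μ x w y) w z) (μ x w (μ y w z)) ≤ C) ∧
  (∀ x y z w : X, dist (μ x y z) (μ w y z) ≤ C * dist x w + C)

/-- The coarse median interval `[x,y]_μ = {μ x y z : z ∈ X}`. -/
def cmInterval {X : Type*} [MetricSpace X] (μ : X → X → X → X) (x y : X) : Set X :=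
  {w : X | ∃ z : X, μ x y z = w}

/-- The closed `R`-neighbourhood `{x : dist(x, A) ≤ R}` of a set. -/
def closedNbhd {X : Type*} [MetricSpace X] (R : ℝ) (A : Set X) : Set X :=
  {x : X | Metric.infDist x A ≤ R}

/-- `A` is `D`-quasiconvex with respect to the coarse median `μ`. -/
def IsCMQuasiconvex {X : Type*} [MetricSpace X] (μ : X → X → X → X) (D : ℝ) (A : Set X) :
    Prop :=
  ∀ a₁ ∈ A, ∀ a₂ ∈ A, cmInterval μ a₁ a₂ ⊆ closedNbhd D A

/-- A metric space is geodesic if any two points are joined by an isometrically embedded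
compact real interval. -/
def IsGeodesicSpace (X : Type*) [MetricSpace X] : Prop :=
  ∀ x y : X, ∃ γ : ℝ → X, γ 0 = x ∧ γ (dist x y) = y ∧
    ∀ s ∈ Set.Icc (0 : ℝ) (dist x y), ∀ t ∈ Set.Icc (0 : ℝ) (dist x y),
      dist (γ s) (γ t) = |s - t|

/-- An `(L, A)`-quasigeodesic from `x` to `y`, defined on the interval `[a, b]`. -/
def IsQuasigeodesicOn {X : Type*} [MetricSpace X] (L A a b : ℝ) (γ : ℝ → X) (x y : X) :
    Prop :=
  a ≤ b ∧ γ a = x ∧ γ b = y ∧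
    ∀ s ∈ Set.Icc a b, ∀ t ∈ Set.Icc a b,
      |s - t| / L - A ≤ dist (γ s) (γ t) ∧ dist (γ s) (γ t) ≤ L * |s - t| + A

/-- The Gromov product `⟨y,z⟩_x`. -/
noncomputable def gromovProd {X : Type*} [MetricSpace X] (x y z : X) : ℝ :=
  (dist x y + dist x z - dist y z) / 2

/-- `X` is `δ`-hyperbolic (four-point condition on Gromov products). -/
def IsDeltaHyperbolic (X : Type*) [MetricSpace X] (δ : ℝ) : Prop :=
  ∀ w x y z : X, min (gromovProd w x y) (gromovProd w y z) ≤ gromovProd w x z + δ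

lemma cm_key {X : Type*} [MetricSpace X] {C : ℝ} {μ : X → X → X → X}
    (hC : 1 ≤ C) (h : IsCoarseMedian C μ) (x y p a b : X)
    (hp : p ∈ cmInterval μ x y) (ha : a ∈ cmInterval μ x p)
    (hb : b ∈ cmInterval μ p y) :
    dist a p + dist b p ≤ 2 * C * dist a b + 4 * C ^ 2 + 10 * C := by
  obtain ⟨h12, h23, hxx, hcm1, hcm2⟩ := h
  obtain ⟨z₀, hz₀⟩ := hp
  obtain ⟨z₁, hz₁⟩ := ha
  obtain ⟨z₂, hz₂⟩ := hb
  have hC0 : (0:ℝ) ≤ C := le_trans zero_le_one hC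
  have p13 : ∀ a b c : X, μ a b c = μ c b a := by
    intro a b c; rw [h23, h12, h23]
  have p231 : ∀ a b c : X, μ a b c = μ b c a := by
    intro a b c; rw [h12, h23]
  -- absorption : dist (μ p x y) p ≤ C
  have habs : dist (μ p x y) p ≤ C := by
    have h1 := hcm1 z₀ y y x
    have e1 : μ y x y = y := by rw [h23, hxx]
    have e2 : μ z₀ x y = p := (p231 z₀ x y).trans hz₀
    rw [e1, e2] at h1
    exact h1
  -- chain bounding dist (μ a p b) p
  have hd1 : dist (μ a p b) (μ x p (μ z₁ p b)) ≤ C := by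
    rw [← hz₁]; exact hcm1 x z₁ b p
  have hd2 : dist (μ z₁ p b) (μ y p (μ z₂ p z₁)) ≤ C := by
    have e : μ z₁ p b = μ (μ y p z₂) p z₁ := by
      rw [p13 z₁ p b]
      congr 1
      rw [← hz₂]; exact h12 p y z₂
    rw [e]; exact hcm1 y z₂ z₁ p
  have hd3 : dist (μ x p (μ z₁ p b)) (μ x p (μ y p (μ z₂ p z₁))) ≤ C * C + C := by
    rw [p13 x p (μ z₁ p b), p13 x p (μ y p (μ z₂ p z₁))]
    have h2 := hcm2 (μ z₁ p b) p x (μ y p (μ z₂ p z₁))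
    have := mul_le_mul_of_nonneg_left hd2 hC0
    linarith
  have hd4 : dist (μ (μ x p y) p (μ z₂ p z₁)) (μ x p (μ y p (μ z₂ p z₁))) ≤ C :=
    hcm1 x y (μ z₂ p z₁) p
  have hd5 : dist (μ (μ x p y) p (μ z₂ p z₁)) p ≤ C * C + C := by
    have h2 := hcm2 (μ x p y) p (μ z₂ p z₁) p
    rw [hxx p (μ z₂ p z₁)] at h2
    have hb' : dist (μ x p y) p ≤ C := by rw [h12 x p y]; exact habs
    have := mul_le_mul_of_nonneg_left hb' hC0
    linarith
  have hmp : dist (μ a p b) p ≤ 2 * C ^ 2 + 4 * C := by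
    have T1 := dist_triangle (μ a p b) (μ x p (μ z₁ p b)) p
    have T2 := dist_triangle (μ x p (μ z₁ p b)) (μ x p (μ y p (μ z₂ p z₁))) p
    have T3 := dist_triangle (μ x p (μ y p (μ z₂ p z₁))) (μ (μ x p y) p (μ z₂ p z₁)) p
    rw [dist_comm (μ (μ x p y) p (μ z₂ p z₁)) (μ x p (μ y p (μ z₂ p z₁)))] at hd4
    nlinarith [hd1, hd3, hd4, hd5]
  have ham : dist a (μ a p b) ≤ C * dist a b + C := by
    have h2 := hcm2 b p a a
    have e2 : μ a p a = a := by rw [h23]; exact hxx a p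
    rw [e2] at h2
    rw [p13 a p b, dist_comm]
    rw [dist_comm b a] at h2
    exact h2
  have hbm : dist b (μ a p b) ≤ C * dist a b + C := by
    have h2 := hcm2 a p b b
    have e2 : μ b p b = b := by rw [h23]; exact hxx b p
    rw [e2] at h2
    rw [dist_comm]
    exact h2
  have Ta := dist_triangle a (μ a p b) p
  have Tb := dist_triangle b (μ a p b) p
  nlinarith [hmp, ham, hbm]

-- helper lemmas to append after aux
lemma quasi_mono {L L' d D : ℝ} (hL : 0 < L) (hLL' : L ≤ L') (hD : 0 ≤ D)
    (h1 : D / L - L ≤ d) (h2 : d ≤ L * D + L) :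
    D / L' - L' ≤ d ∧ d ≤ L' * D + L' := by
  have hL'0 : 0 < L' := lt_of_lt_of_le hL hLL'
  have hdiv : D / L' ≤ D / L := div_le_div_of_nonneg_left hD hL hLL'
  have hmul : L * D ≤ L' * D := mul_le_mul_of_nonneg_right hLL' hD
  exact ⟨by linarith, by linarith⟩

lemma arith_lower {C L d D : ℝ} (hC : 1 ≤ C) (hL : 1 ≤ L) (hd : 0 ≤ d) (hD0 : 0 ≤ D)
    (hD : D ≤ 2 * C * L * d + 2 * L ^ 2 + 4 * C ^ 2 * L + 10 * C * L) :
    D / (2 * C * L + 2 * L + 4 * C ^ 2 + 10 * C) - (2 * C * L + 2 * L + 4 * C ^ 2 + 10 * C) ≤ d := by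
  set L' : ℝ := 2 * C * L + 2 * L + 4 * C ^ 2 + 10 * C with hL'
  have hL'0 : 0 < L' := by nlinarith
  rw [sub_le_iff_le_add, div_le_iff₀ hL'0]
  have h1 : 2 * C * L * d ≤ L' * d := by nlinarith
  have h2 : 2 * L ^ 2 + 4 * C ^ 2 * L + 10 * C * L ≤ L' * L' := by nlinarith
  calc D ≤ 2 * C * L * d + 2 * L ^ 2 + 4 * C ^ 2 * L + 10 * C * L := hD
    _ ≤ L' * d + L' * L' := by linarith
    _ = (d + L') * L' := by ring

/-- Lemma 3.3(1): the concatenation of quasigeodesics lying in the intervals `[x,p]_μ` and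
`[p,y]_μ`, where `p ∈ [x,y]_μ`, is a uniform-quality quasigeodesic from `x` to `y`. -/
theorem concatenation_quasigeodesic :
    ∀ C L : ℝ, 1 ≤ C → 1 ≤ L → ∃ L' : ℝ, 1 ≤ L' ∧
      ∀ (X : Type u) [MetricSpace X], IsGeodesicSpace X →
        ∀ μ : X → X → X → X, IsCoarseMedian C μ →
          ∀ x y p : X, p ∈ cmInterval μ x y →
            ∀ (s t : ℝ) (α β : ℝ → X),
              IsQuasigeodesicOn L L 0 s α x p →
              α '' Set.Icc 0 s ⊆ cmInterval μ x p →
              IsQuasigeodesicOn L L 0 t β p y →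
              β '' Set.Icc 0 t ⊆ cmInterval μ p y →
              IsQuasigeodesicOn L' L' 0 (s + t)
                (fun r => if r ≤ s then α r else β (r - s)) x y := by
  intro C L hC hL
  refine ⟨2 * C * L + 2 * L + 4 * C ^ 2 + 10 * C, by nlinarith, ?_⟩
  intro X _ _hgeo μ hμ x y p hp s t α β hα hαim hβ hβim
  obtain ⟨hs0, hα0, hαs, hαq⟩ := hα
  obtain ⟨ht0, hβ0, hβt, hβq⟩ := hβ
  have hL0 : (0:ℝ) < L := lt_of_lt_of_le one_pos hL
  have hLL' : L ≤ 2 * C * L + 2 * L + 4 * C ^ 2 + 10 * C := by nlinarith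
  have hL2 : 2 * L ≤ 2 * C * L + 2 * L + 4 * C ^ 2 + 10 * C := by nlinarith
  have hL'0 : (0:ℝ) < 2 * C * L + 2 * L + 4 * C ^ 2 + 10 * C := lt_of_lt_of_le hL0 hLL'
  refine ⟨by linarith, ?_, ?_, ?_⟩
  · simp only [if_pos hs0]; exact hα0
  · by_cases hts : s + t ≤ s
    · have ht0' : t = 0 := le_antisymm (by linarith) ht0
      simp only [if_pos hts]
      have hpy : p = y := by rw [← hβ0, ← ht0']; exact hβt
      rw [ht0', add_zero, hαs]; exact hpy
    · simp only [if_neg hts, add_sub_cancel_left]; exact hβt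
  · have est : ∀ r₁ ∈ Set.Icc (0:ℝ) (s + t), ∀ r₂ ∈ Set.Icc (0:ℝ) (s + t), r₁ ≤ r₂ →
        |r₁ - r₂| / (2 * C * L + 2 * L + 4 * C ^ 2 + 10 * C) -
            (2 * C * L + 2 * L + 4 * C ^ 2 + 10 * C) ≤
          dist (if r₁ ≤ s then α r₁ else β (r₁ - s)) (if r₂ ≤ s then α r₂ else β (r₂ - s)) ∧
        dist (if r₁ ≤ s then α r₁ else β (r₁ - s)) (if r₂ ≤ s then α r₂ else β (r₂ - s)) ≤
          (2 * C * L + 2 * L + 4 * C ^ 2 + 10 * C) * |r₁ - r₂| +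
            (2 * C * L + 2 * L + 4 * C ^ 2 + 10 * C) := by
      rintro r₁ ⟨h10, h1t⟩ r₂ ⟨h20, h2t⟩ hle
      have habsd : |r₁ - r₂| = r₂ - r₁ := by
        rw [abs_sub_comm]; exact abs_of_nonneg (by linarith)
      by_cases h2s : r₂ ≤ s
      · have h1s : r₁ ≤ s := le_trans hle h2s
        simp only [if_pos h1s, if_pos h2s]
        have hq := hαq r₁ ⟨h10, h1s⟩ r₂ ⟨h20, h2s⟩
        exact quasi_mono hL0 hLL' (abs_nonneg _) hq.1 hq.2
      · push_neg at h2s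
        by_cases h1s : r₁ ≤ s
        · -- mixed case
          simp only [if_pos h1s, if_neg (not_le.mpr h2s)]
          have hr2s : 0 ≤ r₂ - s := by linarith
          have hmem2 : r₂ - s ∈ Set.Icc (0:ℝ) t := ⟨hr2s, by linarith⟩
          have hap := hαq r₁ ⟨h10, h1s⟩ s ⟨hs0, le_refl s⟩
          rw [hαs] at hap
          have hpb := hβq 0 ⟨le_refl 0, ht0⟩ (r₂ - s) hmem2
          rw [hβ0] at hpb
          have habs1 : |r₁ - s| = s - r₁ := by
            rw [abs_sub_comm]; exact abs_of_nonneg (by linarith)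
          have habs2 : |0 - (r₂ - s)| = r₂ - s := by
            rw [abs_sub_comm, sub_zero]; exact abs_of_nonneg hr2s
          rw [habs1] at hap
          rw [habs2] at hpb
          have hkey := cm_key hC hμ x y p (α r₁) (β (r₂ - s)) hp
            (hαim ⟨r₁, ⟨h10, h1s⟩, rfl⟩) (hβim ⟨r₂ - s, hmem2, rfl⟩)
          have hd0 : (0:ℝ) ≤ dist (α r₁) (β (r₂ - s)) := dist_nonneg
          have hpb' : dist (β (r₂ - s)) p = dist p (β (r₂ - s)) := dist_comm _ _
          constructor
          · rw [habsd]
            have hDb : r₂ - r₁ ≤ 2 * C * L * dist (α r₁) (β (r₂ - s)) + 2 * L ^ 2 +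
                4 * C ^ 2 * L + 10 * C * L := by
              have hq1 : (s - r₁) / L - L ≤ dist (α r₁) p := hap.1
              have hq2 : (r₂ - s) / L - L ≤ dist p (β (r₂ - s)) := hpb.1
              have hsum : (s - r₁ + (r₂ - s)) / L ≤
                  2 * C * dist (α r₁) (β (r₂ - s)) + 4 * C ^ 2 + 10 * C + 2 * L := by
                rw [add_div]
                rw [hpb'] at hkey
                linarith
              have e2 : s - r₁ + (r₂ - s) = r₂ - r₁ := by ring
              rw [e2] at hsum
              have := (div_le_iff₀ hL0).mp hsum
              nlinarith
            exact arith_lower hC hL hd0 (by linarith) hDb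
          · have hub : dist (α r₁) (β (r₂ - s)) ≤ L * (r₂ - r₁) + 2 * L := by
              have T := dist_triangle (α r₁) p (β (r₂ - s))
              have hq1 : dist (α r₁) p ≤ L * (s - r₁) + L := hap.2
              have hq2 : dist p (β (r₂ - s)) ≤ L * (r₂ - s) + L := hpb.2
              nlinarith
            rw [habsd]
            have hmul : L * (r₂ - r₁) ≤ (2 * C * L + 2 * L + 4 * C ^ 2 + 10 * C) * (r₂ - r₁) :=
              mul_le_mul_of_nonneg_right hLL' (by linarith)
            linarith
        · push_neg at h1s
          simp only [if_neg (not_le.mpr h1s), if_neg (not_le.mpr h2s)]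
          have hq := hβq (r₁ - s) ⟨by linarith, by linarith⟩ (r₂ - s) ⟨by linarith, by linarith⟩
          have e : r₁ - s - (r₂ - s) = r₁ - r₂ := by ring
          rw [e] at hq
          exact quasi_mono hL0 hLL' (abs_nonneg _) hq.1 hq.2
    intro r₁ hr₁ r₂ hr₂
    rcases le_total r₁ r₂ with hle | hle
    · exact est r₁ hr₁ r₂ hr₂ hle
    · have := est r₂ hr₂ r₁ hr₁ hle
      rw [abs_sub_comm r₁ r₂, dist_comm]
      exact this
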